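/- A polynomial p of degree 2d is a sum of squares if and only if its homogenization p̃ (a homogeneous polynomial of degree 2d in n+1 variables) is a sum of squares. -/

import Mathlib

open MvPolynomial

/-- `p` is a sum of squares of polynomials. -/
def IsSOS {n : ℕ} (p : MvPolynomial (Fin n) ℝ) : Prop :=
  ∃ (k : ℕ) (q : Fin k → MvPolynomial (Fin n) ℝ), p = ∑ i, q i ^ 2

/-- The degree-`D` homogenization of `p ∈ ℝ[x₁,…,xₙ]`. -/
noncomputable def homogenize (n D : ℕ) (p : MvPolynomial (Fin n) ℝ) :
    MvPolynomial (Fin (n + 1)) ℝ :=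
  ∑ s ∈ p.support,
    MvPolynomial.monomial
      (Finsupp.single (0 : Fin (n + 1)) (D - s.sum fun _ e => e) +
        s.mapDomain Fin.succ) (p.coeff s)

/-- The exponent map used in the homogenization. -/
noncomputable def edeg (n D : ℕ) (s : Fin n →₀ ℕ) : Fin (n + 1) →₀ ℕ :=
  Finsupp.single (0 : Fin (n + 1)) (D - s.sum fun _ e => e) + s.mapDomain Fin.succ

lemma homogenize_def' (n D : ℕ) (p : MvPolynomial (Fin n) ℝ) :
    homogenize n D p = ∑ s ∈ p.support, MvPolynomial.monomial (edeg n D s) (p.coeff s) := rfl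

lemma homogenize_eq_mapDomain (n D : ℕ) (p : MvPolynomial (Fin n) ℝ) :
    homogenize n D p = AddMonoidAlgebra.mapDomain (edeg n D) p := by
  rw [homogenize_def']
  conv_rhs => rw [p.as_sum]
  induction p.support using Finset.induction_on with
  | empty => simp
  | insert a s ha ih =>
    rw [Finset.sum_insert ha, Finset.sum_insert ha, AddMonoidAlgebra.mapDomain_add, ih]
    congr 1
    exact (AddMonoidAlgebra.mapDomain_single (f := edeg n D)).symm

lemma homogenize_monomial (n D : ℕ) (s : Fin n →₀ ℕ) (c : ℝ) :
    homogenize n D (MvPolynomial.monomial s c) = MvPolynomial.monomial (edeg n D s) c := by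
  rw [homogenize_eq_mapDomain]
  classical
  exact AddMonoidAlgebra.mapDomain_single

lemma homogenize_sum {ι : Type*} (n D : ℕ) (S : Finset ι)
    (f : ι → MvPolynomial (Fin n) ℝ) :
    homogenize n D (∑ i ∈ S, f i) = ∑ i ∈ S, homogenize n D (f i) := by
  simp only [homogenize_eq_mapDomain]
  classical
  induction S using Finset.induction_on with
  | empty => simp
  | insert a s ha ih =>
    rw [Finset.sum_insert ha, Finset.sum_insert ha, AddMonoidAlgebra.mapDomain_add, ih]

lemma degree_add' {σ : Type*} (a b : σ →₀ ℕ) : (a + b).degree = a.degree + b.degree := by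
  show ((a + b).sum fun _ e => e) = (a.sum fun _ e => e) + (b.sum fun _ e => e)
  exact Finsupp.sum_add_index' (fun _ => rfl) (fun _ _ _ => rfl)

lemma edeg_add (n A B : ℕ) (s t : Fin n →₀ ℕ)
    (hs : (s.sum fun _ e => e) ≤ A) (ht : (t.sum fun _ e => e) ≤ B) :
    edeg n A s + edeg n B t = edeg n (A + B) (s + t) := by
  unfold edeg
  have hsum : ((s + t).sum fun _ e => e) = (s.sum fun _ e => e) + (t.sum fun _ e => e) :=
    degree_add' s t
  rw [Finsupp.mapDomain_add, hsum]
  have : A + B - ((s.sum fun _ e => e) + (t.sum fun _ e => e)) =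
      A - (s.sum fun _ e => e) + (B - (t.sum fun _ e => e)) := by omega
  rw [this, Finsupp.single_add]
  abel

lemma homogenize_mul (n A B : ℕ) (f g : MvPolynomial (Fin n) ℝ)
    (hf : f.totalDegree ≤ A) (hg : g.totalDegree ≤ B) :
    homogenize n (A + B) (f * g) = homogenize n A f * homogenize n B g := by
  classical
  have hfg : f * g = ∑ s ∈ f.support, ∑ t ∈ g.support,
      MvPolynomial.monomial (s + t) (f.coeff s * g.coeff t) := by
    conv_lhs => rw [f.as_sum, g.as_sum]
    rw [Finset.sum_mul_sum]
    simp [MvPolynomial.monomial_mul]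
  rw [hfg, homogenize_sum]
  rw [homogenize_def' n A f, homogenize_def' n B g, Finset.sum_mul_sum]
  refine Finset.sum_congr rfl fun s hs => ?_
  rw [homogenize_sum]
  refine Finset.sum_congr rfl fun t ht => ?_
  rw [homogenize_monomial, MvPolynomial.monomial_mul,
    edeg_add n A B s t (le_trans (MvPolynomial.le_totalDegree hs) hf)
      (le_trans (MvPolynomial.le_totalDegree ht) hg)]

lemma homogenize_sq (n d : ℕ) (f : MvPolynomial (Fin n) ℝ) (hf : f.totalDegree ≤ d) :
    homogenize n (2 * d) (f ^ 2) = (homogenize n d f) ^ 2 := by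
  have := homogenize_mul n d d f f hf hf
  rw [sq, sq, ← this, two_mul]

/-- Dehomogenization: set `x₀ = 1`. -/
noncomputable def dehom (n : ℕ) : MvPolynomial (Fin (n + 1)) ℝ →ₐ[ℝ] MvPolynomial (Fin n) ℝ :=
  MvPolynomial.aeval (Fin.cases 1 MvPolynomial.X)

lemma dehom_homogenize (n D : ℕ) (p : MvPolynomial (Fin n) ℝ) :
    dehom n (homogenize n D p) = p := by
  classical
  rw [homogenize_def', map_sum]
  have : ∀ s ∈ p.support,
      dehom n (MvPolynomial.monomial (edeg n D s) (p.coeff s)) =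
        MvPolynomial.monomial s (p.coeff s) := by
    intro s _
    have hmono : (MvPolynomial.monomial (edeg n D s) (p.coeff s) :
        MvPolynomial (Fin (n + 1)) ℝ) =
        (MvPolynomial.X 0) ^ (D - s.sum fun _ e => e) *
          MvPolynomial.rename Fin.succ (MvPolynomial.monomial s (p.coeff s)) := by
      rw [MvPolynomial.rename_monomial, MvPolynomial.X_pow_eq_monomial,
        MvPolynomial.monomial_mul, one_mul]
      rfl
    rw [hmono, map_mul, map_pow]
    have h0 : dehom n (MvPolynomial.X 0) = 1 := by
      simp [dehom]
    have h1 : dehom n (MvPolynomial.rename Fin.succ (MvPolynomial.monomial s (p.coeff s))) =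
        MvPolynomial.monomial s (p.coeff s) := by
      rw [dehom, MvPolynomial.aeval_rename]
      have : (Fin.cases 1 MvPolynomial.X ∘ Fin.succ : Fin n → MvPolynomial (Fin n) ℝ) =
          MvPolynomial.X := by
        funext i; simp
      rw [this]
      exact MvPolynomial.aeval_X_left_apply _
    rw [h0, h1, one_pow, one_mul]
  rw [Finset.sum_congr rfl this]
  exact p.support_sum_monomial_coeff

/-- Top homogeneous component of a product. -/
lemma homogeneousComponent_mul_top (n a b : ℕ) (f g : MvPolynomial (Fin n) ℝ)
    (hf : f.totalDegree ≤ a) (hg : g.totalDegree ≤ b) :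
    MvPolynomial.homogeneousComponent (a + b) (f * g) =
      MvPolynomial.homogeneousComponent a f * MvPolynomial.homogeneousComponent b g := by
  classical
  ext u
  rw [MvPolynomial.coeff_homogeneousComponent, MvPolynomial.coeff_mul, MvPolynomial.coeff_mul]
  have key : ∀ st ∈ Finset.HasAntidiagonal.antidiagonal u,
      (MvPolynomial.homogeneousComponent a f).coeff st.1 *
        (MvPolynomial.homogeneousComponent b g).coeff st.2 =
      if st.1.degree = a ∧ st.2.degree = b then f.coeff st.1 * g.coeff st.2 else 0 := by
    intro st _
    rw [MvPolynomial.coeff_homogeneousComponent, MvPolynomial.coeff_homogeneousComponent]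
    by_cases h1 : st.1.degree = a <;> by_cases h2 : st.2.degree = b <;> simp [h1, h2]
  rw [Finset.sum_congr rfl key]
  by_cases hu : u.degree = a + b
  · rw [if_pos hu]
    refine Finset.sum_congr rfl fun st hst => ?_
    rw [Finset.HasAntidiagonal.mem_antidiagonal] at hst
    by_cases hc : st.1.degree = a ∧ st.2.degree = b
    · rw [if_pos hc]
    · rw [if_neg hc]
      by_cases hf1 : f.coeff st.1 = 0
      · rw [hf1, zero_mul]
      by_cases hg1 : g.coeff st.2 = 0
      · rw [hg1, mul_zero]
      exfalso
      have h1 : st.1.degree ≤ a := le_trans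
        (MvPolynomial.le_totalDegree (MvPolynomial.mem_support_iff.2 hf1)) hf
      have h2 : st.2.degree ≤ b := le_trans
        (MvPolynomial.le_totalDegree (MvPolynomial.mem_support_iff.2 hg1)) hg
      have hsum : st.1.degree + st.2.degree = a + b := by
        rw [← degree_add', hst, hu]
      exact hc ⟨by omega, by omega⟩
  · rw [if_neg hu]
    refine (Finset.sum_eq_zero fun st hst => ?_).symm
    rw [Finset.HasAntidiagonal.mem_antidiagonal] at hst
    by_cases hc : st.1.degree = a ∧ st.2.degree = b
    · exfalso
      exact hu (by rw [← hst, degree_add', hc.1, hc.2])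
    · rw [if_neg hc]

/-- A nonzero real polynomial has nonzero top homogeneous component. -/
lemma homogeneousComponent_totalDegree_ne_zero (n : ℕ) (f : MvPolynomial (Fin n) ℝ)
    (hf : f ≠ 0) : MvPolynomial.homogeneousComponent f.totalDegree f ≠ 0 := by
  classical
  obtain ⟨s, hs, hdeg⟩ := Finset.exists_mem_eq_sup f.support
    (MvPolynomial.support_nonempty.2 hf) (fun s => s.sum fun _ e => e)
  intro h
  have : (MvPolynomial.homogeneousComponent f.totalDegree f).coeff s = f.coeff s := by
    rw [MvPolynomial.coeff_homogeneousComponent, if_pos]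
    show (s.sum fun _ e => e) = f.totalDegree
    rw [MvPolynomial.totalDegree, hdeg]
  rw [h] at this
  exact (MvPolynomial.mem_support_iff.1 hs) (by simpa using this.symm)

/-- Degrees in a real sum of squares are bounded by half the total degree. -/
lemma degree_le_of_sum_sq (n d k : ℕ) (q : Fin k → MvPolynomial (Fin n) ℝ)
    (hdeg : (∑ i, q i ^ 2).totalDegree ≤ 2 * d) :
    ∀ i, (q i).totalDegree ≤ d := by
  classical
  by_contra hcon
  push_neg at hcon
  obtain ⟨j, hj⟩ := hcon
  -- let m be the maximal total degree
  set m := Finset.univ.sup (fun i => (q i).totalDegree) with hm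
  have hmd : d < m := lt_of_lt_of_le hj (Finset.le_sup (f := fun i => (q i).totalDegree) (Finset.mem_univ j))
  have hqm : ∀ i, (q i).totalDegree ≤ m := fun i => Finset.le_sup (f := fun i => (q i).totalDegree) (Finset.mem_univ i)
  -- the top components
  set h : Fin k → MvPolynomial (Fin n) ℝ :=
    fun i => MvPolynomial.homogeneousComponent m (q i) with hh
  -- the degree-2m component of the sum is ∑ h i ^ 2
  have hcomp : MvPolynomial.homogeneousComponent (2 * m) (∑ i, q i ^ 2) = ∑ i, h i ^ 2 := by
    rw [map_sum]
    refine Finset.sum_congr rfl fun i _ => ?_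
    rw [sq, sq, two_mul]
    exact homogeneousComponent_mul_top n m m (q i) (q i) (hqm i) (hqm i)
  have h2 : (∑ i, q i ^ 2).totalDegree < 2 * m := lt_of_le_of_lt hdeg (by omega)
  have hzero : MvPolynomial.homogeneousComponent (2 * m) (∑ i, q i ^ 2) = 0 :=
    MvPolynomial.homogeneousComponent_eq_zero (n := 2 * m) (φ := ∑ i, q i ^ 2) h2
  have hsumsq : (∑ i, h i ^ 2) = 0 := by rw [← hcomp, hzero]
  -- pick i₀ achieving the max with q i₀ ≠ 0
  obtain ⟨i₀, _, hi₀⟩ := Finset.exists_mem_eq_sup (Finset.univ : Finset (Fin k))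
    ⟨j, Finset.mem_univ j⟩ (fun i => (q i).totalDegree)
  have hq0 : q i₀ ≠ 0 := by
    intro h0
    rw [h0] at hi₀
    simp only [MvPolynomial.totalDegree_zero] at hi₀
    omega
  have hne : h i₀ ≠ 0 := by
    rw [hh]
    have := homogeneousComponent_totalDegree_ne_zero n (q i₀) hq0
    rw [← hi₀] at this
    exact this
  -- evaluate: sum of squares of real polys is zero iff each is zero
  apply hne
  apply MvPolynomial.funext
  intro x
  have hx : ∑ i, (MvPolynomial.eval x (h i)) ^ 2 = 0 := by
    have := congrArg (MvPolynomial.eval x) hsumsq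
    simpa using this
  have : ∀ i ∈ Finset.univ, (MvPolynomial.eval x (h i)) ^ 2 = 0 :=
    (Finset.sum_eq_zero_iff_of_nonneg (fun i _ => sq_nonneg _)).1 hx
  have := this i₀ (Finset.mem_univ i₀)
  rw [pow_eq_zero_iff (two_ne_zero)] at this
  simp [this]

/-- A polynomial `p` of degree `2d` is a sum of squares iff its homogenization
(a homogeneous polynomial of degree `2d` in `n+1` variables) is a sum of squares. -/
theorem sos_iff_homogenization_sos (n d : ℕ) (p : MvPolynomial (Fin n) ℝ)
    (hdeg : p.totalDegree = 2 * d) :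
    IsSOS p ↔ IsSOS (homogenize n (2 * d) p) := by
  constructor
  · rintro ⟨k, q, rfl⟩
    have hq : ∀ i, (q i).totalDegree ≤ d :=
      degree_le_of_sum_sq n d k q (le_of_eq hdeg)
    refine ⟨k, fun i => homogenize n d (q i), ?_⟩
    rw [homogenize_sum]
    exact Finset.sum_congr rfl fun i _ => homogenize_sq n d (q i) (hq i)
  · rintro ⟨k, q, hq⟩
    refine ⟨k, fun i => dehom n (q i), ?_⟩
    have := congrArg (dehom n) hq
    rw [dehom_homogenize] at this
    rw [this, map_sum]
    exact Finset.sum_congr rfl fun i _ => by rw [map_pow]
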